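/- An integral domain R is a Dedekind domain if and only if for every nonzero ideal I of R there exists a nonzero ideal J of R such that the product I · J is a principal ideal. -/

import Mathlib

open scoped nonZeroDivisors

/-- An integral domain R is a Dedekind domain iff for every nonzero ideal I of R there
exists a nonzero ideal J of R such that I * J is principal. -/
theorem stmt6 (R : Type*) [CommRing R] [IsDomain R] :
    IsDedekindDomain R ↔
      ∀ I : Ideal R, I ≠ ⊥ → ∃ J : Ideal R, J ≠ ⊥ ∧ (I * J).IsPrincipal := by
  constructor
  · intro h I hI
    obtain ⟨a, haI, ha⟩ := Submodule.exists_mem_ne_zero_of_ne_bot hI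
    have hdvd : I ∣ Ideal.span {a} := Ideal.dvd_iff_le.mpr
      ((Ideal.span_singleton_le_iff_mem I).mpr haI)
    obtain ⟨J, hJ⟩ := hdvd
    refine ⟨J, ?_, ?_⟩
    · rintro rfl
      rw [Ideal.mul_bot] at hJ
      exact ha (Ideal.span_singleton_eq_bot.mp hJ)
    · exact ⟨a, by rw [← hJ]⟩
  · intro h
    rw [isDedekindDomain_iff_mul_inv_cancel (K := FractionRing R)]
    intro I hI
    rw [FractionalIdeal.mul_inv_cancel_iff]
    set K := FractionRing R
    obtain ⟨a, J, ha, hIJ⟩ := FractionalIdeal.exists_eq_spanSingleton_mul I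
    have hJ0 : J ≠ ⊥ := by
      rintro rfl
      simp at hIJ
      exact hI hIJ
    obtain ⟨J', hJ'0, ⟨b, hb⟩⟩ := h J hJ0
    have hJJ'0 : J * J' ≠ ⊥ := mul_ne_zero hJ0 hJ'0
    have hb0 : b ≠ 0 := by
      rintro rfl
      rw [hb] at hJJ'0
      simp at hJJ'0
    have haK : algebraMap R K a ≠ 0 := by
      simpa using (map_ne_zero_iff _ (IsFractionRing.injective R K)).mpr ha
    have hbK : algebraMap R K b ≠ 0 := by
      simpa using (map_ne_zero_iff _ (IsFractionRing.injective R K)).mpr hb0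
    refine ⟨FractionalIdeal.spanSingleton R⁰ (algebraMap R K a) * (J' : FractionalIdeal R⁰ K) *
      FractionalIdeal.spanSingleton R⁰ (algebraMap R K b)⁻¹, ?_⟩
    have hcoe : (J : FractionalIdeal R⁰ K) * (J' : FractionalIdeal R⁰ K) =
        FractionalIdeal.spanSingleton R⁰ (algebraMap R K b) := by
      rw [← FractionalIdeal.coeIdeal_mul, hb]
      exact FractionalIdeal.coeIdeal_span_singleton b
    calc I * (FractionalIdeal.spanSingleton R⁰ (algebraMap R K a) * (J' : FractionalIdeal R⁰ K) *
          FractionalIdeal.spanSingleton R⁰ (algebraMap R K b)⁻¹)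
        = (FractionalIdeal.spanSingleton R⁰ (algebraMap R K a)⁻¹ *
            FractionalIdeal.spanSingleton R⁰ (algebraMap R K a)) *
          ((J : FractionalIdeal R⁰ K) * (J' : FractionalIdeal R⁰ K)) *
          FractionalIdeal.spanSingleton R⁰ (algebraMap R K b)⁻¹ := by rw [hIJ]; ring
      _ = 1 := by
          rw [hcoe, FractionalIdeal.spanSingleton_mul_spanSingleton, inv_mul_cancel₀ haK,
            FractionalIdeal.spanSingleton_one, one_mul,
            FractionalIdeal.spanSingleton_mul_spanSingleton, mul_inv_cancel₀ hbK,
            FractionalIdeal.spanSingleton_one]
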